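/- Let X₁, …, X_m be random variables with finite ranges on a common probability space, and let 1 ≤ n ≤ m. With indices taken cyclically modulo m (so X_{k+m} = X_k), n·H(X₁, …, X_m) ≤ ∑_{i=1}^{m} H(X_i, X_{i+1}, …, X_{i+n−1}); that is, n times the joint entropy of all m variables is at most the sum over all m cyclic windows of n consecutive variables of the joint entropy of the window. In particular, for m = 3, n = 2: 2·H(X₁, X₂, X₃) ≤ H(X₁, X₂) + H(X₂, X₃) + H(X₃, X₁). -/

import Mathlib

open MeasureTheory ProbabilityTheory

noncomputable section

/-- Truncation of a real number toward zero. -/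
def truncZ (x : ℝ) : ℤ := if 0 ≤ x then ⌊x⌋ else ⌈x⌉

/-- `pbar P lam = ⌊P ^ (lam / 2)⌋`, i.e. `P̄^lam`. -/
def pbar (P lam : ℝ) : ℤ := ⌊P ^ (lam / 2)⌋

/-- The alphabet `𝒳_lam = {0, 1, …, P̄^lam − 1}`. -/
def Xalph (P lam : ℝ) : Set ℤ := {x : ℤ | 0 ≤ x ∧ x < pbar P lam}

/-- `(X)_lam = X − P̄^lam ⌊X / P̄^lam⌋` (division truncated toward zero). -/
def lowPart (P lam : ℝ) (X : ℤ) : ℤ := X - pbar P lam * (X.tdiv (pbar P lam))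

/-- `(X)^hi_lo = ⌊(X − P̄^hi ⌊X / P̄^hi⌋) / P̄^lo⌋` (divisions truncated toward zero). -/
def midPart (P lo hi : ℝ) (X : ℤ) : ℤ := (lowPart P hi X).tdiv (pbar P lo)

/-- Shannon entropy (natural log) of a random variable with (essentially) finite range. -/
def shEntropy {Ω : Type*} [MeasurableSpace Ω] (μ : Measure Ω) {α : Type*} (X : Ω → α) : ℝ :=
  ∑' a : α, Real.negMulLog (μ (X ⁻¹' {a})).toReal

/-- Conditional Shannon entropy `H(X | Y)`, defined through conditional expectations of
indicators with respect to the σ-algebra generated by `Y`. -/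
def shCondEntropy {Ω : Type*} [MeasurableSpace Ω] (μ : Measure Ω) {α β : Type*}
    [MeasurableSpace β] (X : Ω → α) (Y : Ω → β) : ℝ :=
  ∫ ω, ∑' a : α,
    Real.negMulLog
      ((μ[Set.indicator (X ⁻¹' {a}) (fun _ => (1 : ℝ)) | MeasurableSpace.comap Y inferInstance]) ω)
    ∂μ

/-- `X` and `Y` are conditionally independent given `W`. -/
def CondIndepGiven {Ω α β γ : Type*} [MeasurableSpace Ω] [MeasurableSpace α] [MeasurableSpace β]
    [MeasurableSpace γ] (μ : Measure Ω) (W : Ω → γ) (X : Ω → α) (Y : Ω → β) : Prop :=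
  ∀ (A : Set α) (B : Set β), MeasurableSet A → MeasurableSet B →
    (μ[Set.indicator (X ⁻¹' A ∩ Y ⁻¹' B) (fun _ => (1 : ℝ)) |
        MeasurableSpace.comap W inferInstance])
      =ᵐ[μ]
      fun ω =>
        (μ[Set.indicator (X ⁻¹' A) (fun _ => (1 : ℝ)) | MeasurableSpace.comap W inferInstance]) ω *
        (μ[Set.indicator (Y ⁻¹' B) (fun _ => (1 : ℝ)) | MeasurableSpace.comap W inferInstance]) ω

/-- The conditional distribution of `g` given `V` is a.s. absolutely continuous with
density bounded above by `fmax`: equivalently, the conditional probability of any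
measurable set `S` is a.s. at most `fmax · volume S`. -/
def CondDensityBounded {Ω β : Type*} [MeasurableSpace Ω] [MeasurableSpace β]
    (μ : Measure Ω) (g : Ω → ℝ) (V : Ω → β) (fmax : ℝ) : Prop :=
  ∀ S : Set ℝ, MeasurableSet S →
    ∀ᵐ ω ∂μ,
      ENNReal.ofReal
          ((μ[Set.indicator (g ⁻¹' S) (fun _ => (1 : ℝ)) |
              MeasurableSpace.comap V inferInstance]) ω)
        ≤ ENNReal.ofReal fmax * volume S

/-- Density part of the bounded-density assumption for a family `g`, conditioned on a
random variable `W`: for disjoint subfamilies `s, t`, the conditional joint distribution of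
`(g i)_{i ∈ s}` given `(W, (g j)_{j ∈ t})` is a.s. absolutely continuous with joint density
bounded above by `fmax ^ |s|`. -/
def CondBoundedDensityFamily {Ω ι γ : Type*} [MeasurableSpace Ω] [MeasurableSpace γ]
    [DecidableEq ι] (μ : Measure Ω) (W : Ω → γ) (g : ι → Ω → ℝ) (fmax : ℝ) : Prop :=
  ∀ (s t : Finset ι), s.Nonempty → Disjoint s t →
    ∀ S : Set (s → ℝ), MeasurableSet S →
      ∀ᵐ ω ∂μ,
        ENNReal.ofReal
            ((μ[Set.indicator ((fun ω (i : s) => g i ω) ⁻¹' S) (fun _ => (1 : ℝ)) |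
                MeasurableSpace.comap (fun ω => (W ω, fun j : t => g j ω)) inferInstance]) ω)
          ≤ ENNReal.ofReal (fmax ^ s.card) * volume S

/-- The `(Δ₁, Δ₂, fmax)`-bounded-density assumption for a family `g` of real random
variables (Definition 4 of the paper). -/
def BoundedDensityFamily {Ω ι : Type*} [MeasurableSpace Ω] [DecidableEq ι]
    (μ : Measure Ω) (g : ι → Ω → ℝ) (Δ₁ Δ₂ fmax : ℝ) : Prop :=
  (∀ i, ∀ᵐ ω ∂μ, Δ₁ ≤ |g i ω| ∧ |g i ω| ≤ Δ₂) ∧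
  ∀ (s t : Finset ι), s.Nonempty → Disjoint s t →
    ∀ S : Set (s → ℝ), MeasurableSet S →
      ∀ᵐ ω ∂μ,
        ENNReal.ofReal
            ((μ[Set.indicator ((fun ω (i : s) => g i ω) ⁻¹' S) (fun _ => (1 : ℝ)) |
                MeasurableSpace.comap (fun ω (j : t) => g j ω) inferInstance]) ω)
          ≤ ENNReal.ofReal (fmax ^ s.card) * volume S

/-- Partial sums `Λ_i = λ₁ + ⋯ + λ_i` of the power levels (0-based: `cumSum lam i`
sums the first `i` entries). -/
def cumSum {M : ℕ} (lam : Fin M → ℝ) (i : ℕ) : ℝ :=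
  ∑ r ∈ Finset.univ.filter (fun r : Fin M => (r : ℕ) < i), lam r

end

namespace Stmt11Aux
open MeasureTheory Real Finset



variable {Ω : Type} [MeasurableSpace Ω] (μ : Measure Ω) [IsProbabilityMeasure μ]

noncomputable def ent {κ : Type*} [Fintype κ] (f : Ω → κ) : ℝ :=
  ∑ k, Real.negMulLog (μ (f ⁻¹' {k})).toReal

lemma meas_preimage_finset {κ : Type*} [Fintype κ] (f : Ω → κ)
    (hf : ∀ k, MeasurableSet (f ⁻¹' {k})) (s : Finset κ) :
    (μ (f ⁻¹' (↑s : Set κ))).toReal = ∑ k ∈ s, (μ (f ⁻¹' {k})).toReal := by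
  have hset : f ⁻¹' (↑s : Set κ) = ⋃ k ∈ s, f ⁻¹' {k} := by
    ext ω; simp
  rw [hset, measure_biUnion_finset ?_ (fun k _ => hf k)]
  · rw [ENNReal.toReal_sum]
    exact fun k _ => measure_ne_top μ _
  · intro a _ b _ hab
    refine Set.disjoint_left.2 fun ω ha hb => hab ?_
    simp only [Set.mem_preimage, Set.mem_singleton_iff] at ha hb
    rw [← ha, ← hb]

lemma sum_meas_fiber {κ : Type*} [Fintype κ] (f : Ω → κ)
    (hf : ∀ k, MeasurableSet (f ⁻¹' {k})) :
    ∑ k, (μ (f ⁻¹' {k})).toReal = 1 := by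
  have := meas_preimage_finset μ f hf Finset.univ
  simp only [Finset.coe_univ, Set.preimage_univ] at this
  rw [← this, measure_univ, ENNReal.toReal_one]

lemma meas_comp_fiber {κ κ' : Type*} [Fintype κ] [DecidableEq κ'] (f : Ω → κ) (g : κ → κ')
    (hf : ∀ k, MeasurableSet (f ⁻¹' {k})) (k' : κ') :
    (μ ((fun ω => g (f ω)) ⁻¹' {k'})).toReal
      = ∑ k ∈ Finset.univ.filter (fun k => g k = k'), (μ (f ⁻¹' {k})).toReal := by
  rw [← meas_preimage_finset μ f hf]
  have : (fun ω => g (f ω)) ⁻¹' {k'} = f ⁻¹' ↑(Finset.univ.filter (fun k => g k = k')) := by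
    ext ω; simp
  rw [this]

lemma negMulLog_add_le {a b : ℝ} (ha : 0 ≤ a) (hb : 0 ≤ b) :
    Real.negMulLog (a + b) ≤ Real.negMulLog a + Real.negMulLog b := by
  simp only [Real.negMulLog_eq_neg, ← neg_add, neg_le_neg_iff, add_mul]
  gcongr ?_ + ?_
  · rcases eq_or_lt_of_le ha with h | h
    · simp [← h]
    · exact mul_le_mul_of_nonneg_left (Real.log_le_log h (by linarith)) ha
  · rcases eq_or_lt_of_le hb with h | h
    · simp [← h]
    · exact mul_le_mul_of_nonneg_left (Real.log_le_log h (by linarith)) hb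

lemma negMulLog_sum_le {ι : Type*} (s : Finset ι) (w : ι → ℝ) (hw : ∀ i ∈ s, 0 ≤ w i) :
    Real.negMulLog (∑ i ∈ s, w i) ≤ ∑ i ∈ s, Real.negMulLog (w i) := by
  induction s using Finset.cons_induction with
  | empty => simp
  | cons a t hat ih =>
    rw [Finset.sum_cons, Finset.sum_cons]
    calc Real.negMulLog (w a + ∑ i ∈ t, w i)
        ≤ Real.negMulLog (w a) + Real.negMulLog (∑ i ∈ t, w i) :=
          negMulLog_add_le (hw a (Finset.mem_cons_self a t))
            (Finset.sum_nonneg fun i hi => hw i (Finset.mem_cons_of_mem hi))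
      _ ≤ _ := by
          gcongr
          exact ih fun i hi => hw i (Finset.mem_cons_of_mem hi)

lemma ent_comp_le {κ κ' : Type*} [Fintype κ] [Fintype κ'] [DecidableEq κ']
    (f : Ω → κ) (g : κ → κ') (hf : ∀ k, MeasurableSet (f ⁻¹' {k})) :
    ent μ (fun ω => g (f ω)) ≤ ent μ f := by
  unfold ent
  calc ∑ k', Real.negMulLog (μ ((fun ω => g (f ω)) ⁻¹' {k'})).toReal
      = ∑ k', Real.negMulLog (∑ k ∈ Finset.univ.filter (fun k => g k = k'),
          (μ (f ⁻¹' {k})).toReal) := by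
        refine Finset.sum_congr rfl fun k' _ => ?_
        rw [meas_comp_fiber μ f g hf]
    _ ≤ ∑ k', ∑ k ∈ Finset.univ.filter (fun k => g k = k'),
          Real.negMulLog (μ (f ⁻¹' {k})).toReal := by
        refine Finset.sum_le_sum fun k' _ => ?_
        exact negMulLog_sum_le _ _ fun k _ => ENNReal.toReal_nonneg
    _ = ∑ k, Real.negMulLog (μ (f ⁻¹' {k})).toReal :=
        Finset.sum_fiberwise _ _ _

lemma ent_congr {κ κ' : Type*} [Fintype κ] [Fintype κ'] [DecidableEq κ] [DecidableEq κ']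
    (f : Ω → κ) (g : Ω → κ')
    (hf : ∀ k, MeasurableSet (f ⁻¹' {k})) (hg : ∀ k, MeasurableSet (g ⁻¹' {k}))
    (u : κ' → κ) (hu : f = fun ω => u (g ω)) (v : κ → κ') (hv : g = fun ω => v (f ω)) :
    ent μ f = ent μ g := by
  refine le_antisymm ?_ ?_
  · rw [hu]; exact ent_comp_le μ g u hg
  · rw [hv]; exact ent_comp_le μ f v hf



lemma gibbs_core {κ lamT ρ : Type*} [Fintype κ] [Fintype lamT] [Fintype ρ] [DecidableEq ρ]
    (c : lamT → ρ) (P : κ → lamT → ℝ) (hP : ∀ a b, 0 ≤ P a b)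
    (hsum : ∑ b, ∑ a, P a b = 1) :
    ∑ a, ∑ b, negMulLog (P a b)
      + ∑ r, negMulLog (∑ b ∈ univ.filter (fun b => c b = r), ∑ a, P a b)
    ≤ ∑ b, negMulLog (∑ a, P a b)
      + ∑ a, ∑ r, negMulLog (∑ b ∈ univ.filter (fun b => c b = r), P a b) := by
  classical
  set Pg : lamT → ℝ := fun b => ∑ a, P a b with hPgdef
  set Q : κ → ρ → ℝ := fun a r => ∑ b ∈ univ.filter (fun b => c b = r), P a b with hQdef
  set Pc : ρ → ℝ := fun r => ∑ b ∈ univ.filter (fun b => c b = r), Pg b with hPcdef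
  have hPg0 : ∀ b, 0 ≤ Pg b := fun b => Finset.sum_nonneg fun a _ => hP a b
  have hQ0 : ∀ a r, 0 ≤ Q a r := fun a r => Finset.sum_nonneg fun b _ => hP a b
  have hPc0 : ∀ r, 0 ≤ Pc r := fun r => Finset.sum_nonneg fun b _ => hPg0 b
  have hPgsum : ∑ b, Pg b = 1 := hsum
  have hQsum : ∀ r, ∑ a, Q a r = Pc r := by
    intro r
    exact Finset.sum_comm
  have hle_Pg : ∀ a b, P a b ≤ Pg b := fun a b =>
    Finset.single_le_sum (fun a' _ => hP a' b) (mem_univ a)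
  have hle_Q : ∀ a b, P a b ≤ Q a (c b) := fun a b =>
    Finset.single_le_sum (f := fun b' => P a b') (fun b' _ => hP a b') (by simp)
  have hle_Pc : ∀ b, Pg b ≤ Pc (c b) := fun b =>
    Finset.single_le_sum (f := fun b' => Pg b') (fun b' _ => hPg0 b') (by simp)
  set t : κ → lamT → ℝ :=
    fun a b => if Pc (c b) = 0 then 0 else Pg b * Q a (c b) / Pc (c b) with htdef
  have htab : ∀ a b, Pc (c b) ≠ 0 → t a b = Pg b * Q a (c b) / Pc (c b) := by
    intro a b hc
    simp only [htdef, if_neg hc]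
  have ht0 : ∀ a b, 0 ≤ t a b := by
    intro a b
    by_cases hc : Pc (c b) = 0
    · simp [htdef, hc]
    · rw [htab a b hc]
      exact div_nonneg (mul_nonneg (hPg0 b) (hQ0 a (c b))) (hPc0 (c b))
  have key : ∀ a b, P a b * log (Pg b) + P a b * log (Q a (c b))
      ≤ P a b * log (P a b) + P a b * log (Pc (c b)) + (t a b - P a b) := by
    intro a b
    rcases eq_or_lt_of_le (hP a b) with h | h
    · rw [← h]
      simpa using ht0 a b
    · have hPgpos : 0 < Pg b := lt_of_lt_of_le h (hle_Pg a b)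
      have hQpos : 0 < Q a (c b) := lt_of_lt_of_le h (hle_Q a b)
      have hPcpos : 0 < Pc (c b) := lt_of_lt_of_le hPgpos (hle_Pc b)
      have htab' : t a b = Pg b * Q a (c b) / Pc (c b) := htab a b hPcpos.ne'
      have htpos : 0 < t a b := by rw [htab']; positivity
      have hlog : log (t a b) = log (Pg b) + log (Q a (c b)) - log (Pc (c b)) := by
        rw [htab', log_div (by positivity) hPcpos.ne', log_mul hPgpos.ne' hQpos.ne']
      have h1 : log (t a b / P a b) ≤ t a b / P a b - 1 :=
        log_le_sub_one_of_pos (by positivity)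
      rw [log_div htpos.ne' h.ne'] at h1
      have h2 := mul_le_mul_of_nonneg_left h1 h.le
      rw [mul_sub, mul_sub, mul_div_cancel₀ _ h.ne', mul_one] at h2
      have h3 : P a b * log (t a b)
          = P a b * log (Pg b) + P a b * log (Q a (c b)) - P a b * log (Pc (c b)) := by
        rw [hlog]; ring
      linarith
  have htsum : ∑ a, ∑ b, t a b ≤ 1 := by
    rw [Finset.sum_comm]
    calc ∑ b, ∑ a, t a b ≤ ∑ b, Pg b := by
          refine Finset.sum_le_sum fun b _ => ?_
          by_cases hc : Pc (c b) = 0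
          · simp [htdef, hc, hPg0 b]
          · refine le_of_eq ?_
            calc ∑ a, t a b = ∑ a, Pg b * Q a (c b) / Pc (c b) :=
                  Finset.sum_congr rfl fun a _ => htab a b hc
              _ = Pg b * (∑ a, Q a (c b)) / Pc (c b) := by
                  rw [← Finset.sum_div, ← Finset.mul_sum]
              _ = Pg b := by
                  rw [hQsum, mul_div_assoc, div_self hc, mul_one]
      _ = 1 := hPgsum
  -- rewrite the four entropy sums
  have comm : ∀ F : κ → lamT → ℝ, ∑ a, ∑ b, F a b = ∑ b, ∑ a, F a b :=
    fun F => Finset.sum_comm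
  have hA : ∑ a, ∑ b, negMulLog (P a b) = -∑ a, ∑ b, P a b * log (P a b) := by
    simp [Real.negMulLog_def, ← Finset.sum_neg_distrib]
  have hB : ∑ b, negMulLog (Pg b) = -∑ a, ∑ b, P a b * log (Pg b) := by
    rw [comm fun a b => P a b * log (Pg b), ← Finset.sum_neg_distrib]
    refine Finset.sum_congr rfl fun b _ => ?_
    rw [← Finset.sum_mul]
    simp only [Real.negMulLog_def, neg_mul]
    rfl
  have hC : ∑ r, negMulLog (Pc r) = -∑ a, ∑ b, P a b * log (Pc (c b)) := by
    rw [comm fun a b => P a b * log (Pc (c b)), ← Finset.sum_neg_distrib,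
      ← Finset.sum_fiberwise univ c (fun b => -∑ a, P a b * log (Pc (c b)))]
    refine Finset.sum_congr rfl fun r _ => ?_
    have h5 : ∑ b ∈ univ.filter (fun b => c b = r), (-∑ a, P a b * log (Pc (c b)))
        = ∑ b ∈ univ.filter (fun b => c b = r), (-(Pg b * log (Pc r))) := by
      refine Finset.sum_congr rfl fun b hb => ?_
      rw [(Finset.mem_filter.1 hb).2, ← Finset.sum_mul]
    rw [h5, Finset.sum_neg_distrib, ← Finset.sum_mul]
    simp only [Real.negMulLog_def, neg_mul]
    rfl
  have hD : ∀ a, ∑ r, negMulLog (Q a r) = -∑ b, P a b * log (Q a (c b)) := by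
    intro a
    rw [← Finset.sum_neg_distrib,
      ← Finset.sum_fiberwise univ c (fun b => -(P a b * log (Q a (c b))))]
    refine Finset.sum_congr rfl fun r _ => ?_
    have h5 : ∑ b ∈ univ.filter (fun b => c b = r), -(P a b * log (Q a (c b)))
        = ∑ b ∈ univ.filter (fun b => c b = r), -(P a b * log (Q a r)) := by
      refine Finset.sum_congr rfl fun b hb => ?_
      rw [(Finset.mem_filter.1 hb).2]
    rw [h5, Finset.sum_neg_distrib, ← Finset.sum_mul]
    simp only [Real.negMulLog_def, neg_mul]
    rfl
  have hD' : ∑ a, ∑ r, negMulLog (Q a r) = -∑ a, ∑ b, P a b * log (Q a (c b)) := by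
    rw [← Finset.sum_neg_distrib]
    exact Finset.sum_congr rfl fun a _ => hD a
  have hPsum1 : ∑ a, ∑ b, P a b = 1 := by rw [Finset.sum_comm]; exact hsum
  have hmain : ∑ a, ∑ b, (P a b * log (Pg b) + P a b * log (Q a (c b)))
      ≤ ∑ a, ∑ b, (P a b * log (P a b) + P a b * log (Pc (c b)) + (t a b - P a b)) :=
    Finset.sum_le_sum fun a _ => Finset.sum_le_sum fun b _ => key a b
  have e1 : ∑ a, ∑ b, (P a b * log (Pg b) + P a b * log (Q a (c b)))
      = ∑ a, ∑ b, P a b * log (Pg b) + ∑ a, ∑ b, P a b * log (Q a (c b)) := by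
    rw [← Finset.sum_add_distrib]
    exact Finset.sum_congr rfl fun a _ => Finset.sum_add_distrib
  have e2 : ∑ a, ∑ b, (P a b * log (P a b) + P a b * log (Pc (c b)) + (t a b - P a b))
      = ∑ a, ∑ b, P a b * log (P a b) + ∑ a, ∑ b, P a b * log (Pc (c b))
        + (∑ a, ∑ b, t a b - ∑ a, ∑ b, P a b) := by
    rw [← Finset.sum_sub_distrib, ← Finset.sum_add_distrib, ← Finset.sum_add_distrib]
    refine Finset.sum_congr rfl fun a _ => ?_
    rw [← Finset.sum_sub_distrib, ← Finset.sum_add_distrib, ← Finset.sum_add_distrib]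
  rw [hA, hB, hC, hD']
  rw [e1, e2, hPsum1] at hmain
  linarith




lemma sum_filter_snd {κ lamT : Type*} [Fintype κ] [Fintype lamT] [DecidableEq lamT]
    (F : κ × lamT → ℝ) (b : lamT) :
    ∑ k ∈ univ.filter (fun k : κ × lamT => k.2 = b), F k = ∑ a, F (a, b) := by
  rw [Finset.sum_filter, Fintype.sum_prod_type]
  simp [Finset.sum_ite_eq']

lemma sum_filter_mapsnd {κ lamT ρ : Type*} [Fintype κ] [Fintype lamT]
    [DecidableEq κ] [DecidableEq ρ] (c : lamT → ρ)
    (F : κ × lamT → ℝ) (a : κ) (r : ρ) :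
    ∑ k ∈ univ.filter (fun k : κ × lamT => (k.1, c k.2) = (a, r)), F k
      = ∑ b ∈ univ.filter (fun b => c b = r), F (a, b) := by
  rw [Finset.sum_filter, Fintype.sum_prod_type, Finset.sum_filter]
  simp [Prod.ext_iff, ite_and, Finset.sum_ite_eq']

lemma sum_filter_csnd {κ lamT ρ : Type*} [Fintype κ] [Fintype lamT]
    [DecidableEq ρ] (c : lamT → ρ) (F : κ × lamT → ℝ) (r : ρ) :
    ∑ k ∈ univ.filter (fun k : κ × lamT => c k.2 = r), F k
      = ∑ b ∈ univ.filter (fun b => c b = r), ∑ a, F (a, b) := by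
  calc ∑ k ∈ univ.filter (fun k : κ × lamT => c k.2 = r), F k
      = ∑ b, ∑ a, if c b = r then F (a, b) else 0 := by
        rw [Finset.sum_filter, Fintype.sum_prod_type, Finset.sum_comm]
    _ = ∑ b, (if c b = r then (∑ a, F (a, b)) else 0) :=
        Finset.sum_congr rfl fun b _ => by split <;> simp
    _ = _ := (Finset.sum_filter _ _).symm


lemma ent_pair_comp {Ω : Type} [MeasurableSpace Ω] (μ : Measure Ω) [IsProbabilityMeasure μ]
    {κ lamT ρ : Type*} [Fintype κ] [Fintype lamT] [Fintype ρ]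
    [DecidableEq κ] [DecidableEq lamT] [DecidableEq ρ]
    (f : Ω → κ) (g : Ω → lamT) (c : lamT → ρ)
    (hfg : ∀ k : κ × lamT, MeasurableSet ((fun ω => (f ω, g ω)) ⁻¹' {k})) :
    ent μ (fun ω => (f ω, g ω)) + ent μ (fun ω => c (g ω))
      ≤ ent μ g + ent μ (fun ω => (f ω, c (g ω))) := by
  classical
  set pair : Ω → κ × lamT := fun ω => (f ω, g ω) with hpairdef
  set P : κ → lamT → ℝ := fun a b => (μ (pair ⁻¹' {(a, b)})).toReal with hPdef
  have hP0 : ∀ a b, 0 ≤ P a b := fun a b => ENNReal.toReal_nonneg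
  have hsum : ∑ b, ∑ a, P a b = 1 := by
    rw [← sum_meas_fiber μ pair hfg, Fintype.sum_prod_type, Finset.sum_comm]
  have epair : ent μ pair = ∑ a, ∑ b, negMulLog (P a b) := by
    unfold ent
    rw [Fintype.sum_prod_type]
  have eg : ent μ g = ∑ b, negMulLog (∑ a, P a b) := by
    unfold ent
    refine Finset.sum_congr rfl fun b _ => ?_
    congr 1
    have h1 : (μ ((fun ω => Prod.snd (pair ω)) ⁻¹' {b})).toReal = ∑ a, P a b := by
      rw [meas_comp_fiber μ pair Prod.snd hfg b, sum_filter_snd]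
    exact h1
  have ecg : ent μ (fun ω => c (g ω))
      = ∑ r, negMulLog (∑ b ∈ univ.filter (fun b => c b = r), ∑ a, P a b) := by
    unfold ent
    refine Finset.sum_congr rfl fun r _ => ?_
    congr 1
    have h1 : (μ ((fun ω => (fun k : κ × lamT => c k.2) (pair ω)) ⁻¹' {r})).toReal
        = ∑ b ∈ univ.filter (fun b => c b = r), ∑ a, P a b := by
      rw [meas_comp_fiber μ pair (fun k => c k.2) hfg r, sum_filter_csnd]
    exact h1
  have efcg : ent μ (fun ω => (f ω, c (g ω)))
      = ∑ a, ∑ r, negMulLog (∑ b ∈ univ.filter (fun b => c b = r), P a b) := by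
    unfold ent
    rw [Fintype.sum_prod_type]
    refine Finset.sum_congr rfl fun a _ => Finset.sum_congr rfl fun r _ => ?_
    congr 1
    have h1 : (μ ((fun ω => (fun k : κ × lamT => (k.1, c k.2)) (pair ω)) ⁻¹' {(a, r)})).toReal
        = ∑ b ∈ univ.filter (fun b => c b = r), P a b := by
      rw [meas_comp_fiber μ pair (fun k => (k.1, c k.2)) hfg (a, r), sum_filter_mapsnd]
    exact h1
  rw [hpairdef] at epair
  rw [epair, eg, ecg, efcg]
  exact gibbs_core c P hP0 hsum

end Stmt11Aux

open MeasureTheory ProbabilityTheory in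
theorem stmt_11 (m n : ℕ) (hn : 1 ≤ n) (hnm : n ≤ m)
    (Ω : Type) [MeasurableSpace Ω] (μ : Measure Ω) [IsProbabilityMeasure μ]
    (α : Fin m → Type) [∀ i, Finite (α i)] [∀ i, MeasurableSpace (α i)]
    [∀ i, MeasurableSingletonClass (α i)]
    (X : (i : Fin m) → Ω → α i) (hX : ∀ i, Measurable (X i)) :
    (n : ℝ) * shEntropy μ (fun ω (i : Fin m) => X i ω)
      ≤ ∑ i : Fin m,
          shEntropy μ (fun ω (k : Fin n) => X (i + Fin.castLE hnm k) ω) := by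
  classical
  haveI : NeZero m := ⟨by omega⟩
  haveI : ∀ i, Fintype (α i) := fun i => Fintype.ofFinite _
  haveI : NeZero μ := ⟨IsProbabilityMeasure.ne_zero μ⟩
  obtain ⟨ω₀⟩ : Nonempty Ω := MeasureTheory.Measure.nonempty_of_neZero μ
  set d : ∀ i, α i := fun i => X i ω₀ with hd
  set F : Finset (Fin m) → Ω → ∀ i, α i :=
    fun S ω i => if i ∈ S then X i ω else d i with hF
  have hFm : ∀ S, Measurable (F S) := by
    intro S
    rw [measurable_pi_iff]
    intro i
    by_cases h : i ∈ S
    · simpa [hF, h] using hX i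
    · simpa [hF, h] using measurable_const
  have hFfib : ∀ S (x : ∀ i, α i), MeasurableSet (F S ⁻¹' {x}) :=
    fun S x => hFm S (measurableSet_singleton x)
  -- projection relation
  have hproj : ∀ S T : Finset (Fin m), S ⊆ T →
      F S = fun ω => (fun (z : ∀ i, α i) (i : Fin m) => if i ∈ S then z i else d i) (F T ω) := by
    intro S T hST
    funext ω
    funext i
    by_cases h : i ∈ S
    · simp [hF, h, hST h]
    · simp [hF, h]
  -- pair identification
  have hpairfib : ∀ (T : Finset (Fin m)) (j : Fin m)
      (k : α j × (∀ i, α i)), MeasurableSet ((fun ω => (X j ω, F T ω)) ⁻¹' {k}) :=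
    fun T j k => ((hX j).prodMk (hFm T)) (measurableSet_singleton k)
  have pairEq : ∀ (T : Finset (Fin m)) (j : Fin m),
      Stmt11Aux.ent μ (fun ω => (X j ω, F T ω)) = Stmt11Aux.ent μ (F (insert j T)) := by
    intro T j
    refine (Stmt11Aux.ent_congr μ (F (insert j T)) (fun ω => (X j ω, F T ω))
      (hFfib _) (hpairfib T j)
      (fun p => Function.update p.2 j p.1) ?_
      (fun z => (z j, fun i => if i ∈ T then z i else d i)) ?_).symm
    · funext ω
      funext i
      by_cases hij : i = j
      · subst hij
        simp [hF, Function.update_self]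
      · simp [hF, Function.update_of_ne hij, Finset.mem_insert, hij]
    · funext ω
      refine Prod.ext ?_ ?_
      · simp [hF]
      · funext i
        by_cases h : i ∈ T
        · simp [hF, h, Finset.mem_insert]
        · simp [hF, h]
  -- submodularity in chain form
  have hsubmod : ∀ (S T : Finset (Fin m)) (j : Fin m), S ⊆ T →
      Stmt11Aux.ent μ (F (insert j T)) + Stmt11Aux.ent μ (F S)
        ≤ Stmt11Aux.ent μ (F T) + Stmt11Aux.ent μ (F (insert j S)) := by
    intro S T j hST
    have key := Stmt11Aux.ent_pair_comp μ (X j) (F T)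
      (fun (z : ∀ i, α i) (i : Fin m) => if i ∈ S then z i else d i) (hpairfib T j)
    have t2 : Stmt11Aux.ent μ
        (fun ω => (fun (z : ∀ i, α i) (i : Fin m) => if i ∈ S then z i else d i) (F T ω))
        = Stmt11Aux.ent μ (F S) := (congrArg (Stmt11Aux.ent μ) (hproj S T hST)).symm
    have hps : (fun ω => (X j ω,
        (fun (z : ∀ i, α i) (i : Fin m) => if i ∈ S then z i else d i) (F T ω)))
        = fun ω => (X j ω, F S ω) := by
      funext ω
      exact congrArg (Prod.mk (X j ω)) (congrFun (hproj S T hST) ω).symm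
    have t3 : Stmt11Aux.ent μ (fun ω => (X j ω,
        (fun (z : ∀ i, α i) (i : Fin m) => if i ∈ S then z i else d i) (F T ω)))
        = Stmt11Aux.ent μ (F (insert j S)) :=
      (congrArg (Stmt11Aux.ent μ) hps).trans (pairEq S j)
    rw [pairEq T j, t2, t3] at key
    exact key
  -- empty set has zero entropy
  have hFempty : F ∅ = fun _ => d := by
    funext ω i
    simp [hF]
  have hempty : Stmt11Aux.ent μ (F ∅) = 0 := by
    rw [hFempty]
    unfold Stmt11Aux.ent
    rw [Finset.sum_eq_single d]
    · have h1 : (fun (_ : Ω) => d) ⁻¹' {d} = Set.univ := by ext ω; simp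
      rw [h1, measure_univ]
      simp
    · intro x _ hx
      have h1 : (fun (_ : Ω) => d) ⁻¹' {x} = ∅ := by
        ext ω
        simp [Ne.symm hx]
      rw [h1]
      simp
    · intro h
      exact absurd (Finset.mem_univ d) h
  -- prefixes
  set B : ℕ → Finset (Fin m) := fun k => Finset.univ.filter (fun i : Fin m => (i : ℕ) < k)
    with hB
  set g : ℕ → ℝ := fun k => Stmt11Aux.ent μ (F (B k)) with hg
  set Δ : Fin m → ℝ := fun j => g (j.val + 1) - g j.val with hΔ
  have hBsucc : ∀ j : Fin m, B (j.val + 1) = insert j (B j.val) := by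
    intro j
    ext i
    simp only [hB, Finset.mem_filter, Finset.mem_univ, true_and, Finset.mem_insert]
    rw [Nat.lt_succ_iff_lt_or_eq, Fin.ext_iff]
    tauto
  -- chain bound
  have hchain : ∀ (N : ℕ) (S : Finset (Fin m)), S.card ≤ N →
      ∑ j ∈ S, Δ j ≤ Stmt11Aux.ent μ (F S) := by
    intro N
    induction N with
    | zero =>
      intro S hS
      rw [Nat.le_zero, Finset.card_eq_zero] at hS
      subst hS
      simp [hempty]
    | succ N ih =>
      intro S hS
      rcases S.eq_empty_or_nonempty with rfl | hne
      · simp [hempty]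
      · have hjS : S.max' hne ∈ S := S.max'_mem hne
        set j := S.max' hne with hj
        set S' := S.erase j with hS'
        have hsub : S' ⊆ B j.val := by
          intro i hi
          simp only [hB, Finset.mem_filter, Finset.mem_univ, true_and]
          have hij : i ≠ j := Finset.ne_of_mem_erase hi
          have hle := S.le_max' i (Finset.mem_of_mem_erase hi)
          have : (i : ℕ) ≤ (j : ℕ) := hle
          rcases lt_or_eq_of_le this with h | h
          · exact h
          · exact absurd (Fin.ext h) hij
        have hins : insert j S' = S := Finset.insert_erase hjS
        have hsm := hsubmod S' (B j.val) j hsub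
        have hcard : S'.card ≤ N := by
          have h1 : S'.card = S.card - 1 := Finset.card_erase_of_mem hjS
          have h2 : 1 ≤ S.card := Finset.card_pos.2 hne
          omega
        have ih' := ih S' hcard
        have hsum : ∑ j' ∈ S, Δ j' = Δ j + ∑ j' ∈ S', Δ j' :=
          (Finset.add_sum_erase S Δ hjS).symm
        have hΔj : Δ j = Stmt11Aux.ent μ (F (B (j.val + 1))) - Stmt11Aux.ent μ (F (B j.val)) :=
          rfl
        have hBj : Stmt11Aux.ent μ (F (B (j.val + 1)))
            = Stmt11Aux.ent μ (F (insert j (B j.val))) := by rw [hBsucc j]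
        have hSins : Stmt11Aux.ent μ (F (insert j S')) = Stmt11Aux.ent μ (F S) := by
          rw [hins]
        rw [hsum]
        linarith [hsm, ih', hΔj, hBj, hSins]
  -- telescoping
  have hB0 : B 0 = ∅ := by
    ext i
    simp [hB]
  have hBm : B m = Finset.univ := by
    ext i
    simp [hB, i.isLt]
  have hteles : ∑ j : Fin m, Δ j = Stmt11Aux.ent μ (F Finset.univ) := by
    have h1 : ∑ j : Fin m, Δ j = ∑ k ∈ Finset.range m, (g (k + 1) - g k) :=
      Fin.sum_univ_eq_sum_range (fun k => g (k + 1) - g k) m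
    rw [h1, Finset.sum_range_sub g]
    rw [hg]
    simp only []
    rw [hB0, hBm, hempty]
    ring
  -- windows
  set W : Fin m → Finset (Fin m) :=
    fun i => Finset.image (fun k : Fin n => i + Fin.castLE hnm k) Finset.univ with hW
  have hwinj : ∀ i : Fin m, Function.Injective (fun k : Fin n => i + Fin.castLE hnm k) := by
    intro i k1 k2 h
    have h2 : Fin.castLE hnm k1 = Fin.castLE hnm k2 := by
      have := h
      simpa using add_right_injective i this
    exact Fin.castLE_injective hnm h2
  have hWsum : ∀ i : Fin m, ∑ j ∈ W i, Δ j = ∑ k : Fin n, Δ (i + Fin.castLE hnm k) := by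
    intro i
    rw [hW]
    exact Finset.sum_image (fun x _ y _ h => hwinj i h)
  have hwinfib : ∀ i : Fin m, ∀ a : (k : Fin n) → α (i + Fin.castLE hnm k),
      MeasurableSet ((fun ω (k : Fin n) => X (i + Fin.castLE hnm k) ω) ⁻¹' {a}) := by
    intro i a
    have : Measurable (fun ω (k : Fin n) => X (i + Fin.castLE hnm k) ω) :=
      measurable_pi_iff.2 fun k => hX _
    exact this (measurableSet_singleton a)
  have hwin : ∀ i : Fin m,
      Stmt11Aux.ent μ (F (W i))
        = Stmt11Aux.ent μ (fun ω (k : Fin n) => X (i + Fin.castLE hnm k) ω) := by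
    intro i
    refine Stmt11Aux.ent_congr μ (F (W i)) (fun ω (k : Fin n) => X (i + Fin.castLE hnm k) ω)
      (hFfib _) (hwinfib i)
      (fun (a : (k : Fin n) → α (i + Fin.castLE hnm k)) (i' : Fin m) =>
        if h : ∃ k : Fin n, i + Fin.castLE hnm k = i' then h.choose_spec ▸ a h.choose else d i')
      ?_ (fun z (k : Fin n) => z (i + Fin.castLE hnm k)) ?_
    · funext ω
      funext i'
      by_cases h : ∃ k : Fin n, i + Fin.castLE hnm k = i'
      · have hmem : i' ∈ W i := by
          rw [hW]
          exact Finset.mem_image.2 ⟨h.choose, Finset.mem_univ _, h.choose_spec⟩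
        have hgen : ∀ (j' : Fin m) (e : i + Fin.castLE hnm h.choose = j'),
            X j' ω = e ▸ X (i + Fin.castLE hnm h.choose) ω := by
          rintro _ rfl
          rfl
        simp only [hF, hmem, if_true, dif_pos h]
        exact hgen i' h.choose_spec
      · have hmem : i' ∉ W i := by
          rw [hW]
          intro hc
          obtain ⟨k, _, hk⟩ := Finset.mem_image.1 hc
          exact h ⟨k, hk⟩
        simp only [hF, hmem, if_false, dif_neg h]
    · funext ω
      funext k
      have hmem : i + Fin.castLE hnm k ∈ W i := by
        rw [hW]
        exact Finset.mem_image.2 ⟨k, Finset.mem_univ _, rfl⟩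
      simp [hF, hmem]
  -- identify shEntropy with ent
  have hshent : ∀ {κ : Type} [Fintype κ] (f : Ω → κ), shEntropy μ f = Stmt11Aux.ent μ f := by
    intro κ _ f
    unfold shEntropy Stmt11Aux.ent
    exact tsum_fintype _
  have hFuniv : F Finset.univ = fun ω (i : Fin m) => X i ω := by
    funext ω i
    simp [hF]
  -- final computation
  calc (n : ℝ) * shEntropy μ (fun ω (i : Fin m) => X i ω)
      = (n : ℝ) * ∑ j : Fin m, Δ j := by
        rw [← hFuniv] at *
        rw [hshent (F Finset.univ), hteles]
    _ = ∑ k : Fin n, ∑ j : Fin m, Δ j := by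
        rw [Finset.sum_const, Finset.card_univ, Fintype.card_fin, nsmul_eq_mul]
    _ = ∑ k : Fin n, ∑ i : Fin m, Δ (i + Fin.castLE hnm k) := by
        refine Finset.sum_congr rfl fun k _ => ?_
        exact (Function.Bijective.sum_comp (Equiv.addRight (Fin.castLE hnm k)).bijective Δ).symm
    _ = ∑ i : Fin m, ∑ k : Fin n, Δ (i + Fin.castLE hnm k) := Finset.sum_comm
    _ = ∑ i : Fin m, ∑ j ∈ W i, Δ j := Finset.sum_congr rfl fun i _ => (hWsum i).symm
    _ ≤ ∑ i : Fin m, Stmt11Aux.ent μ (F (W i)) :=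
        Finset.sum_le_sum fun i _ => hchain (W i).card (W i) le_rfl
    _ = ∑ i : Fin m, shEntropy μ (fun ω (k : Fin n) => X (i + Fin.castLE hnm k) ω) := by
        refine Finset.sum_congr rfl fun i _ => ?_
        rw [hwin i, hshent]
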